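/- Existential-quantifier simulation in planning: Let I be a planning instance in which variable p occurs in no action, variable x occurs in no effect, and p is false in the initial state. Construct I' by adding actions ⟨¬p, {x, p}⟩ and ⟨¬p, {¬x, p}⟩ and conjoining p to the precondition of every original action. Then I' has a plan if and only if the instance obtained from I by fixing x to true in the initial state has a plan, or the instance obtained from I by fixing x to false in the initial state has a plan. -/

import Mathlib

/-- Propositional formulas over variables indexed by `Nat`. -/
inductive Fm where
  | var : Nat → Fm
  | tru : Fm
  | fls : Fm
  | neg : Fm → Fm
  | conj : Fm → Fm → Fm
  | disj : Fm → Fm → Fm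
deriving DecidableEq

/-- Evaluation of a formula under an assignment. -/
def Fm.eval (σ : Nat → Bool) : Fm → Bool
  | .var n => σ n
  | .tru => true
  | .fls => false
  | .neg F => !(F.eval σ)
  | .conj F G => F.eval σ && G.eval σ
  | .disj F G => F.eval σ || G.eval σ

/-- `F.subst x v` replaces every occurrence of variable `x` by the constant `v`. -/
def Fm.subst (x : Nat) (v : Bool) : Fm → Fm
  | .var n => if n = x then (if v then .tru else .fls) else .var n
  | .tru => .tru
  | .fls => .fls
  | .neg F => .neg (F.subst x v)
  | .conj F G => .conj (F.subst x v) (G.subst x v)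
  | .disj F G => .disj (F.subst x v) (G.subst x v)

/-- `F.occurs x` : variable `x` occurs in `F`. -/
def Fm.occurs (x : Nat) : Fm → Prop
  | .var n => n = x
  | .tru => False
  | .fls => False
  | .neg F => F.occurs x
  | .conj F G => F.occurs x ∨ G.occurs x
  | .disj F G => F.occurs x ∨ G.occurs x

/-- A STRIPS-style action with a formula precondition and a list of literal effects. -/
structure PAct where
  pre : Fm
  eff : List (Nat × Bool)
deriving DecidableEq

/-- Applying an action to a state: effect literals are set, other variables unchanged. -/
def PAct.apply (a : PAct) (s : Nat → Bool) : Nat → Bool :=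
  fun n => match a.eff.lookup n with
    | some v => v
    | none => s n

/-- A planning instance: a set of available actions, an initial state, and a goal formula. -/
structure PInst where
  acts : Set PAct
  init : Nat → Bool
  goal : Fm

/-- `Reach A s π s'` : executing the sequence `π` of actions of `A` from state `s`
is possible (each precondition holds when the action is executed) and ends in `s'`. -/
def Reach (A : Set PAct) : (Nat → Bool) → List PAct → (Nat → Bool) → Prop
  | s, [], s' => s' = s
  | s, a :: π, s' => a ∈ A ∧ a.pre.eval s = true ∧ Reach A (a.apply s) π s'

/-- `π` is a plan for the instance `I`. -/
def IsPlan (I : PInst) (π : List PAct) : Prop :=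
  ∃ s, Reach I.acts I.init π s ∧ I.goal.eval s = true

/-- The instance has a plan. -/
def HasPlan (I : PInst) : Prop := ∃ π, IsPlan I π

/-- The two new actions of the existential-quantifier construction. -/
def setX (x p : Nat) (v : Bool) : PAct := ⟨.neg (.var p), [(x, v), (p, true)]⟩

/-- Conjoin `p` to the precondition of an action. -/
def pguard (p : Nat) (a : PAct) : PAct := ⟨.conj (.var p) a.pre, a.eff⟩

/-- The merged instance `I'` of the existential-quantifier construction. -/
def existMerge (I : PInst) (x p : Nat) : PInst :=
  ⟨{setX x p true, setX x p false} ∪ pguard p '' I.acts, I.init, I.goal⟩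

lemma lookup_eq_none_of {p : Nat} :
    ∀ {eff : List (Nat × Bool)}, (∀ v, (p, v) ∉ eff) → eff.lookup p = none
  | [], _ => rfl
  | (k, w) :: l, h => by
    have hk : p ≠ k := by rintro rfl; exact h w (List.mem_cons_self)
    have hb : (p == k) = false := by simp [hk]
    simp only [List.lookup, hb]
    exact lookup_eq_none_of fun w hw => h w (List.mem_cons_of_mem _ hw)

lemma eval_update_of_not_occurs (p : Nat) (b : Bool) (t : Nat → Bool) :
    ∀ F : Fm, ¬ F.occurs p → F.eval (Function.update t p b) = F.eval t
  | .var n, h => by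
    have hn : n ≠ p := h
    simp [Fm.eval, Function.update, hn]
  | .tru, _ => rfl
  | .fls, _ => rfl
  | .neg F, h => by
    simp [Fm.eval, eval_update_of_not_occurs p b t F h]
  | .conj F G, h => by
    rw [show Fm.occurs p (.conj F G) = (F.occurs p ∨ G.occurs p) from rfl, not_or] at h
    simp [Fm.eval, eval_update_of_not_occurs p b t F h.1,
      eval_update_of_not_occurs p b t G h.2]
  | .disj F G, h => by
    rw [show Fm.occurs p (.disj F G) = (F.occurs p ∨ G.occurs p) from rfl, not_or] at h
    simp [Fm.eval, eval_update_of_not_occurs p b t F h.1,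
      eval_update_of_not_occurs p b t G h.2]

lemma apply_update (a : PAct) (p : Nat) (b : Bool) (t : Nat → Bool)
    (h : ∀ v, (p, v) ∉ a.eff) :
    a.apply (Function.update t p b) = Function.update (a.apply t) p b := by
  funext n
  by_cases hn : n = p
  · subst hn
    simp [PAct.apply, lookup_eq_none_of h, Function.update]
  · simp only [PAct.apply, Function.update_of_ne hn]

lemma setX_apply (x p : Nat) (v : Bool) (hxp : x ≠ p) (s : Nat → Bool) :
    (setX x p v).apply s = Function.update (Function.update s x v) p true := by
  funext n
  by_cases hnx : n = x
  · subst hnx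
    have hb : (n == n) = true := by simp
    simp [setX, PAct.apply, List.lookup, hb, Function.update, hxp]
  · have hb : (n == x) = false := by simp [hnx]
    by_cases hnp : n = p
    · subst hnp
      have hb2 : (n == n) = true := by simp
      simp [setX, PAct.apply, List.lookup, hb, hb2, Function.update]
    · have hb2 : (n == p) = false := by simp [hnp]
      simp [setX, PAct.apply, List.lookup, hb, hb2, Function.update, hnx, hnp]

lemma reach_back (I : PInst) (x p : Nat)
    (hpAct : ∀ a ∈ I.acts, ¬ a.pre.occurs p ∧ ∀ v, (p, v) ∉ a.eff) :
    ∀ (ρ : List PAct) (t s' : Nat → Bool),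
      Reach ({setX x p true, setX x p false} ∪ pguard p '' I.acts)
        (Function.update t p true) ρ s' →
      ∃ ρ' s'', Reach I.acts t ρ' s'' ∧ s' = Function.update s'' p true
  | [], t, s', h => ⟨[], t, rfl, h⟩
  | a :: ρ, t, s', h => by
    obtain ⟨hmem, hpre, hre⟩ := h
    rcases hmem with hmem | ⟨b, hb, rfl⟩
    · exfalso
      have hpe : a.pre = Fm.neg (Fm.var p) := by
        rcases hmem with rfl | rfl <;> rfl
      rw [hpe] at hpre
      simp [Fm.eval, Function.update] at hpre
    · have hb' := hpAct b hb
      have hpre' : b.pre.eval t = true := by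
        simp only [pguard, Fm.eval, Function.update_self, Bool.true_and] at hpre
        rwa [eval_update_of_not_occurs p true t b.pre hb'.1] at hpre
      have hre' : Reach ({setX x p true, setX x p false} ∪ pguard p '' I.acts)
          (Function.update (b.apply t) p true) ρ s' := by
        have := apply_update (pguard p b) p true t hb'.2
        rwa [this] at hre
      obtain ⟨ρ', s'', hr, rfl⟩ := reach_back I x p hpAct ρ (b.apply t) s' hre'
      exact ⟨b :: ρ', s'', ⟨hb, hpre', hr⟩, rfl⟩

lemma reach_fwd (I : PInst) (x p : Nat)
    (hpAct : ∀ a ∈ I.acts, ¬ a.pre.occurs p ∧ ∀ v, (p, v) ∉ a.eff) :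
    ∀ (ρ : List PAct) (t s' : Nat → Bool),
      Reach I.acts t ρ s' →
      Reach ({setX x p true, setX x p false} ∪ pguard p '' I.acts)
        (Function.update t p true) (ρ.map (pguard p)) (Function.update s' p true)
  | [], t, s', h => by
    have : s' = t := h
    subst this; rfl
  | a :: ρ, t, s', h => by
    obtain ⟨ha, hpre, hre⟩ := h
    refine ⟨Or.inr ⟨a, ha, rfl⟩, ?_, ?_⟩
    · simp [pguard, Fm.eval, Function.update_self,
        eval_update_of_not_occurs p true t a.pre (hpAct a ha).1, hpre]
    · have := apply_update (pguard p a) p true t (hpAct a ha).2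
      rw [show (pguard p a).apply (Function.update t p true) =
        Function.update (a.apply t) p true from this]
      exact reach_fwd I x p hpAct ρ (a.apply t) s' hre

/-- existential-quantifier simulation in planning: the merged
instance `I'` has a plan iff `I` with `x` fixed to true in the initial state
has a plan, or `I` with `x` fixed to false has a plan. -/
theorem exists_simulation_planning (I : PInst) (x p : Nat) (hxp : x ≠ p)
    (hpAct : ∀ a ∈ I.acts, ¬ a.pre.occurs p ∧ ∀ v, (p, v) ∉ a.eff)
    (hxEff : ∀ a ∈ I.acts, ∀ v, (x, v) ∉ a.eff)
    (hpInit : I.init p = false) (hpGoal : ¬ I.goal.occurs p) :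
    HasPlan (existMerge I x p) ↔
      (HasPlan ⟨I.acts, Function.update I.init x true, I.goal⟩ ∨
       HasPlan ⟨I.acts, Function.update I.init x false, I.goal⟩) := by
  constructor
  · rintro ⟨π, s, hr, hg⟩
    cases π with
    | nil =>
      have hs : s = I.init := hr
      subst hs
      cases hv : I.init x with
      | true =>
        left
        refine ⟨[], I.init, ?_, hg⟩
        show I.init = Function.update I.init x true
        rw [← hv, Function.update_eq_self]
      | false =>
        right
        refine ⟨[], I.init, ?_, hg⟩
        show I.init = Function.update I.init x false
        rw [← hv, Function.update_eq_self]
    | cons a ρ =>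
      obtain ⟨hmem, hpre, hre⟩ := hr
      simp only [existMerge] at hmem hre hg hpre
      rcases hmem with (rfl | rfl) | ⟨b, hb, rfl⟩
      · -- setX x p true
        rw [setX_apply x p true hxp] at hre
        obtain ⟨ρ', s'', hr', rfl⟩ :=
          reach_back I x p hpAct ρ (Function.update I.init x true) s hre
        left
        refine ⟨ρ', s'', hr', ?_⟩
        rwa [eval_update_of_not_occurs p true s'' I.goal hpGoal] at hg
      · -- setX x p false
        rw [setX_apply x p false hxp] at hre
        obtain ⟨ρ', s'', hr', rfl⟩ :=
          reach_back I x p hpAct ρ (Function.update I.init x false) s hre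
        right
        refine ⟨ρ', s'', hr', ?_⟩
        rwa [eval_update_of_not_occurs p true s'' I.goal hpGoal] at hg
      · exfalso
        simp [pguard, Fm.eval, hpInit] at hpre
  · rintro (⟨π, s, hr, hg⟩ | ⟨π, s, hr, hg⟩)
    · refine ⟨setX x p true :: π.map (pguard p), Function.update s p true, ⟨?_, ?_, ?_⟩, ?_⟩
      · exact Or.inl (Or.inl rfl)
      · simp [existMerge, setX, Fm.eval, hpInit]
      · show Reach _ ((setX x p true).apply I.init) _ _
        rw [setX_apply x p true hxp]
        exact reach_fwd I x p hpAct π (Function.update I.init x true) s hr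
      · show Fm.eval _ I.goal = true
        rw [eval_update_of_not_occurs p true s I.goal hpGoal]; exact hg
    · refine ⟨setX x p false :: π.map (pguard p), Function.update s p true, ⟨?_, ?_, ?_⟩, ?_⟩
      · exact Or.inl (Or.inr rfl)
      · simp [existMerge, setX, Fm.eval, hpInit]
      · show Reach _ ((setX x p false).apply I.init) _ _
        rw [setX_apply x p false hxp]
        exact reach_fwd I x p hpAct π (Function.update I.init x false) s hr
      · show Fm.eval _ I.goal = true
        rw [eval_update_of_not_occurs p true s I.goal hpGoal]; exact hg
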